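/- arXiv:2101.01893 — 3 statements merged into one kernel-verified Lean document; each statement's English description precedes it below -/
import Mathlib

section
/- The generating function of the degenerate Bernoulli numbers equals the Gauss hypergeometric function: t/(e_λ(t)-1) = ₂F₁(1-λ, 1; 2; 1-e_λ(t)), i.e., Σ_{n≥0} β_{n,λ} t^n/n! = Σ_{k≥0} (⟨1-λ⟩_k ⟨1⟩_k / ⟨2⟩_k) (1-e_λ(t))^k / k!. -/
open Finset PowerSeries

noncomputable section

/-- The generalized (degenerate) falling factorial `(x)_{n,λ} = ∏_{j<n} (x - jλ)`. -/
def dfall (x : ℝ) (n : ℕ) (lam : ℝ) : ℝ := ∏ j ∈ Finset.range n, (x - j * lam)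

/-- The degenerate exponential `e_λ^x(t) = Σ_{n≥0} (x)_{n,λ} t^n / n!` as a formal power series. -/
def degExp (lam x : ℝ) : PowerSeries ℝ :=
  PowerSeries.mk fun n => dfall x n lam / n.factorial

/-- The degenerate Stirling numbers of the second kind, defined by
`(1/k!)(e_λ(t)-1)^k = Σ_{n≥k} S_{2,λ}(n,k) t^n/n!`. -/
def S2 (lam : ℝ) (n k : ℕ) : ℝ :=
  (n.factorial : ℝ) / (k.factorial : ℝ) * PowerSeries.coeff n ((degExp lam 1 - 1) ^ k)

/-- The degenerate Stirling polynomials of the second kind, defined by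
`(1/k!)(e_λ(t)-1)^k e_λ^x(t) = Σ_{n≥k} S_{2,λ}(n,k|x) t^n/n!`. -/
def S2p (lam : ℝ) (n k : ℕ) (x : ℝ) : ℝ :=
  (n.factorial : ℝ) / (k.factorial : ℝ) *
    PowerSeries.coeff n ((degExp lam 1 - 1) ^ k * degExp lam x)

/-- The degenerate logarithm `log_λ(1+t) = Σ_{n≥1} λ^{n-1}(1)_{n,1/λ} t^n/n!`. -/
def degLog (lam : ℝ) : PowerSeries ℝ :=
  PowerSeries.mk fun n => if n = 0 then 0 else lam ^ (n - 1) * dfall 1 n (1 / lam) / n.factorial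

/-- The degenerate Stirling numbers of the first kind, defined by
`(1/k!)(log_λ(1+t))^k = Σ_{n≥k} S_{1,λ}(n,k) t^n/n!`. -/
def S1 (lam : ℝ) (n k : ℕ) : ℝ :=
  (n.factorial : ℝ) / (k.factorial : ℝ) * PowerSeries.coeff n ((degLog lam) ^ k)

/-- Rising factorial `⟨a⟩_k = a(a+1)⋯(a+k-1)`. -/
def rising (a : ℝ) (k : ℕ) : ℝ := ∏ j ∈ Finset.range k, (a + j)

/-- The generalized degenerate Bernoulli polynomials `β_{n,λ}^{(p)}(x)`, defined by
`Σ_{n≥0} β_{n,λ}^{(p)}(x) t^n/n! = ₂F₁(1-λ,1;p+2;1-e_λ(t)) e_λ^x(t)`.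
Since `1 - e_λ(t)` has zero constant term, the coefficient of `t^n` in the
hypergeometric series only involves the terms with `k ≤ n`. -/
def genBetaPoly (lam : ℝ) (p : ℤ) (x : ℝ) (n : ℕ) : ℝ :=
  (n.factorial : ℝ) * PowerSeries.coeff n
    ((∑ k ∈ Finset.range (n + 1),
        (rising (1 - lam) k * rising 1 k / (rising ((p : ℝ) + 2) k * k.factorial)) •
          ((1 - degExp lam 1) ^ k)) * degExp lam x)

/-- The generalized degenerate Bernoulli numbers `β_{n,λ}^{(p)} = β_{n,λ}^{(p)}(0)`. -/
def genBeta (lam : ℝ) (p : ℤ) (n : ℕ) : ℝ := genBetaPoly lam p 0 n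

/-- The degenerate type Eulerian numbers, defined by
`(-1)^{n-m} A_λ(n,m) = Σ_{k=0}^{n-m} λ^k (1)_{k+1,1/λ} C(n-k,m) S_{2,λ}(n,k)`. -/
def Eul (lam : ℝ) (n m : ℕ) : ℝ :=
  (-1 : ℝ) ^ (n - m) * ∑ k ∈ Finset.range (n - m + 1),
    lam ^ k * dfall 1 (k + 1) (1 / lam) * ((n - k).choose m : ℝ) * S2 lam n k

namespace Aux
variable (lam : ℝ)

/-- coefficient of f^k where f = e_λ - 1 -/
def p (k m : ℕ) : ℝ := PowerSeries.coeff m ((degExp lam 1 - 1) ^ k)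

def b (k : ℕ) : ℝ := (∏ j ∈ Finset.range k, (lam - (j + 1))) / (k + 1).factorial

lemma coeff_E (m : ℕ) : PowerSeries.coeff m (degExp lam 1) = dfall 1 m lam / m.factorial := by
  simp [degExp]

lemma constCoeff_f : PowerSeries.constantCoeff (degExp lam 1 - 1) = 0 := by
  rw [map_sub, map_one, ← PowerSeries.coeff_zero_eq_constantCoeff_apply]
  simp [coeff_E, dfall]

lemma p_eq_zero {k m : ℕ} (h : m < k) : p lam k m = 0 := by
  have hdvd : (PowerSeries.X : PowerSeries ℝ) ^ k ∣ (degExp lam 1 - 1) ^ k :=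
    pow_dvd_pow_of_dvd (PowerSeries.X_dvd_iff.mpr (constCoeff_f lam)) k
  exact (PowerSeries.X_pow_dvd_iff.mp hdvd) m h

lemma dfall_succ (m : ℕ) : dfall 1 (m + 1) lam = dfall 1 m lam * (1 - m * lam) := by
  simp [dfall, Finset.prod_range_succ]

lemma ode : (1 + PowerSeries.C lam * PowerSeries.X) * (PowerSeries.derivative ℝ (degExp lam 1))
    = degExp lam 1 := by
  ext m
  rw [add_mul, one_mul, map_add, mul_assoc]
  rw [PowerSeries.coeff_C_mul]
  cases m with
  | zero =>
    simp [PowerSeries.coeff_derivative, coeff_E, dfall, Finset.prod_range_succ]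
  | succ m =>
    rw [mul_comm (PowerSeries.X : PowerSeries ℝ), PowerSeries.coeff_succ_mul_X]
    rw [PowerSeries.coeff_derivative, PowerSeries.coeff_derivative, coeff_E, coeff_E]
    rw [dfall_succ, dfall_succ]
    have h1 : ((m + 1).factorial : ℝ) ≠ 0 := Nat.cast_ne_zero.mpr (Nat.factorial_ne_zero _)
    have h2 : ((m + 1 + 1).factorial : ℝ) ≠ 0 := Nat.cast_ne_zero.mpr (Nat.factorial_ne_zero _)
    have h3 : ((m + 1 + 1).factorial : ℝ) = (m + 2) * (m + 1).factorial := by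
      rw [Nat.factorial_succ]; push_cast; ring
    rw [h3]
    push_cast
    field_simp
    ring

lemma coeff_X_mul_deriv (g : PowerSeries ℝ) (m : ℕ) :
    PowerSeries.coeff m (PowerSeries.X * PowerSeries.derivative ℝ g)
      = m * PowerSeries.coeff m g := by
  cases m with
  | zero => rw [mul_comm, PowerSeries.coeff_zero_mul_X]; simp
  | succ m =>
    rw [mul_comm, PowerSeries.coeff_succ_mul_X, PowerSeries.coeff_derivative]
    push_cast; ring

lemma hDf : PowerSeries.derivative ℝ (degExp lam 1 - 1) = PowerSeries.derivative ℝ (degExp lam 1) := by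
  rw [map_sub]; simp

lemma key (k : ℕ) : (1 + PowerSeries.C lam * PowerSeries.X) *
      PowerSeries.derivative ℝ ((degExp lam 1 - 1) ^ (k + 1))
    = (k + 1 : ℕ) • ((degExp lam 1 - 1) ^ (k + 1) + (degExp lam 1 - 1) ^ k) := by
  rw [Derivation.leibniz_pow, Nat.add_sub_cancel, hDf, smul_eq_mul, mul_smul_comm]
  congr 1
  rw [show (1 + PowerSeries.C lam * PowerSeries.X) *
      ((degExp lam 1 - 1) ^ k * PowerSeries.derivative ℝ (degExp lam 1))
      = (degExp lam 1 - 1) ^ k *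
        ((1 + PowerSeries.C lam * PowerSeries.X) * PowerSeries.derivative ℝ (degExp lam 1)) by
    ring, ode]
  have h : degExp lam 1 = (degExp lam 1 - 1) + 1 := by ring
  rw [h]; ring

lemma rel (k m : ℕ) : ((m : ℝ) + 1) * p lam (k + 1) (m + 1) + lam * m * p lam (k + 1) m
    = ((k : ℝ) + 1) * (p lam (k + 1) m + p lam k m) := by
  have h := congrArg (PowerSeries.coeff m) (key lam k)
  rw [add_mul, one_mul, mul_assoc, map_add, PowerSeries.coeff_C_mul, coeff_X_mul_deriv,
    PowerSeries.coeff_derivative, map_nsmul, nsmul_eq_mul, map_add] at h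
  unfold p
  push_cast at h ⊢
  linarith [h]

lemma b_zero : b lam 0 = 1 := by simp [b]

lemma b_succ (k : ℕ) : b lam (k + 1) * ((k : ℝ) + 2) = b lam k * (lam - (k + 1)) := by
  unfold b
  rw [Finset.prod_range_succ]
  have h2 : ((k + 2).factorial : ℝ) = ((k : ℝ) + 2) * (k + 1).factorial := by
    rw [Nat.factorial_succ]; push_cast; ring
  have h1 : ((k + 1).factorial : ℝ) ≠ 0 := Nat.cast_ne_zero.mpr (Nat.factorial_ne_zero _)
  have h2' : ((k : ℝ) + 2) ≠ 0 := by positivity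
  rw [h2]
  field_simp

def S (m : ℕ) : ℝ := ∑ k ∈ Finset.range (m + 1), b lam k * p lam (k + 1) m

lemma p_zero_coeff (m : ℕ) : p lam 0 m = if m = 0 then 1 else 0 := by
  simp [p, PowerSeries.coeff_one]

lemma S_zero : S lam 0 = 0 := by
  simp [S, p, PowerSeries.coeff_zero_eq_constantCoeff, constCoeff_f]

lemma S_rec (m : ℕ) : ((m : ℝ) + 1) * S lam (m + 1)
    = lam * (1 - m) * S lam m + (if m = 0 then 1 else 0) := by
  have e1 : ((m : ℝ) + 1) * S lam (m + 1)
      = ∑ k ∈ Finset.range (m + 2),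
          (b lam k * (((k : ℝ) + 1) * (p lam (k + 1) m + p lam k m))
            - b lam k * (lam * m * p lam (k + 1) m)) := by
    unfold S
    rw [Finset.mul_sum]
    apply Finset.sum_congr rfl
    intro k _
    linear_combination b lam k * rel lam k m
  have e2 : ∑ k ∈ Finset.range (m + 2), b lam k * ((k : ℝ) + 1) * p lam k m
      = (∑ k ∈ Finset.range (m + 1), b lam k * (lam - ((k : ℝ) + 1)) * p lam (k + 1) m)
        + (if m = 0 then 1 else 0) := by
    rw [Finset.sum_range_succ']
    congr 1
    · apply Finset.sum_congr rfl
      intro k _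
      have hb := b_succ lam k
      push_cast
      linear_combination p lam (k + 1) m * hb
    · simp [b_zero, p_zero_coeff]
  have e3 : ∑ k ∈ Finset.range (m + 2), b lam k * ((k : ℝ) + 1) * p lam (k + 1) m
      = ∑ k ∈ Finset.range (m + 1), b lam k * ((k : ℝ) + 1) * p lam (k + 1) m := by
    rw [Finset.sum_range_succ]
    have htop : p lam (m + 1 + 1) m = 0 := p_eq_zero lam (by omega)
    rw [htop]
    ring
  have e4 : ∑ k ∈ Finset.range (m + 2), b lam k * (lam * m * p lam (k + 1) m)
      = ∑ k ∈ Finset.range (m + 1), b lam k * (lam * m * p lam (k + 1) m) := by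
    rw [Finset.sum_range_succ]
    have htop : p lam (m + 1 + 1) m = 0 := p_eq_zero lam (by omega)
    rw [htop]
    ring
  have e5 : ∀ k, b lam k * (((k : ℝ) + 1) * (p lam (k + 1) m + p lam k m))
        - b lam k * (lam * m * p lam (k + 1) m)
      = (b lam k * ((k : ℝ) + 1) * p lam (k + 1) m - b lam k * (lam * m * p lam (k + 1) m))
        + b lam k * ((k : ℝ) + 1) * p lam k m := by
    intro k; ring
  simp only [e5] at e1
  rw [Finset.sum_add_distrib, Finset.sum_sub_distrib, e2, e3, e4] at e1
  have e6 : (∑ k ∈ Finset.range (m + 1), b lam k * ((k : ℝ) + 1) * p lam (k + 1) m)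
      - (∑ k ∈ Finset.range (m + 1), b lam k * (lam * m * p lam (k + 1) m))
      + (∑ k ∈ Finset.range (m + 1), b lam k * (lam - ((k : ℝ) + 1)) * p lam (k + 1) m)
      = lam * (1 - m) * S lam m := by
    unfold S
    rw [Finset.mul_sum, ← Finset.sum_sub_distrib, ← Finset.sum_add_distrib]
    apply Finset.sum_congr rfl
    intro k _
    ring
  rw [e1]
  linarith [e6]

lemma S_val (m : ℕ) : S lam m = if m = 1 then 1 else 0 := by
  induction m with
  | zero => simp [S_zero]
  | succ m ih =>
    have h := S_rec lam m
    rw [ih] at h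
    have hm1 : ((m : ℝ) + 1) ≠ 0 := by positivity
    cases m with
    | zero =>
      norm_num at h ⊢
      linarith
    | succ m =>
      have hz : S lam (m + 1 + 1) = 0 := by
        rcases Nat.eq_zero_or_pos m with hm | hm
        · subst hm
          norm_num at h
          linarith
        · have hne : (m + 1 ≠ 1) := by omega
          have hne0 : (m + 1 ≠ 0) := by omega
          simp only [hne, hne0, if_false] at h
          have h2 : ((m : ℝ) + 1 + 1) ≠ 0 := by positivity
          have := h
          push_cast at this
          nlinarith [this]
      rw [hz]
      have : m + 1 + 1 ≠ 1 := by omega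
      simp [this]

lemma rising_one (k : ℕ) : (∏ j ∈ Finset.range k, ((1 : ℝ) + j)) = k.factorial := by
  induction k with
  | zero => simp
  | succ k ih =>
    rw [Finset.prod_range_succ, ih, Nat.factorial_succ]
    push_cast; ring

lemma rising_two (k : ℕ) : (∏ j ∈ Finset.range k, ((2 : ℝ) + j)) = (k + 1).factorial := by
  induction k with
  | zero => simp
  | succ k ih =>
    rw [Finset.prod_range_succ, ih, Nat.factorial_succ (k + 1)]
    push_cast; ring

lemma rising_neg (k : ℕ) : (∏ j ∈ Finset.range k, ((1 - lam : ℝ) + j)) * (-1 : ℝ) ^ k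
    = ∏ j ∈ Finset.range k, (lam - ((j : ℝ) + 1)) := by
  rw [show ((-1 : ℝ) ^ k) = ∏ _j ∈ Finset.range k, (-1 : ℝ) by simp, ← Finset.prod_mul_distrib]
  apply Finset.prod_congr rfl
  intro j _
  ring

def Cser : PowerSeries ℝ := PowerSeries.mk fun n => ∑ k ∈ Finset.range (n + 1), b lam k * p lam k n

lemma coeff_Cser {j m : ℕ} (h : j ≤ m) :
    PowerSeries.coeff j (Cser lam) = ∑ k ∈ Finset.range (m + 1), b lam k * p lam k j := by
  rw [Cser, PowerSeries.coeff_mk]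
  apply Finset.sum_subset
  · exact Finset.range_subset_range.mpr (by omega)
  · intro k hk hk2
    simp only [Finset.mem_range, not_lt] at hk2
    rw [p_eq_zero lam (by omega), mul_zero]

lemma mul_Cser : (degExp lam 1 - 1) * Cser lam = PowerSeries.X := by
  ext m
  set Cm : PowerSeries ℝ :=
    ∑ k ∈ Finset.range (m + 1), PowerSeries.C (b lam k) * (degExp lam 1 - 1) ^ k with hCm
  have hcoeffCm : ∀ j, PowerSeries.coeff j Cm
      = ∑ k ∈ Finset.range (m + 1), b lam k * p lam k j := by
    intro j
    rw [hCm, map_sum]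
    apply Finset.sum_congr rfl
    intro k _
    rw [PowerSeries.coeff_C_mul]
    rfl
  have hstep : PowerSeries.coeff m ((degExp lam 1 - 1) * Cser lam)
      = PowerSeries.coeff m ((degExp lam 1 - 1) * Cm) := by
    rw [PowerSeries.coeff_mul, PowerSeries.coeff_mul]
    apply Finset.sum_congr rfl
    intro ij hij
    rw [Finset.HasAntidiagonal.mem_antidiagonal] at hij
    congr 1
    rw [hcoeffCm, coeff_Cser lam (show ij.2 ≤ m by omega)]
  rw [hstep]
  have hmul : (degExp lam 1 - 1) * Cm
      = ∑ k ∈ Finset.range (m + 1), PowerSeries.C (b lam k) * (degExp lam 1 - 1) ^ (k + 1) := by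
    rw [hCm, Finset.mul_sum]
    apply Finset.sum_congr rfl
    intro k _
    rw [pow_succ]
    ring
  rw [hmul, map_sum]
  have : ∀ k ∈ Finset.range (m + 1),
      PowerSeries.coeff m (PowerSeries.C (b lam k) * (degExp lam 1 - 1) ^ (k + 1))
      = b lam k * p lam (k + 1) m := by
    intro k _
    rw [PowerSeries.coeff_C_mul]
    rfl
  rw [Finset.sum_congr rfl this]
  have := S_val lam m
  rw [S] at this
  rw [this, PowerSeries.coeff_X]

lemma f_ne_zero : (degExp lam 1 - 1 : PowerSeries ℝ) ≠ 0 := by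
  intro h
  have h1 : PowerSeries.coeff 1 (degExp lam 1 - 1) = 1 := by
    rw [map_sub, coeff_E]
    simp [dfall, PowerSeries.coeff_one]
  rw [h] at h1
  simp at h1

end Aux

theorem stmt3 (lam : ℝ) (B : PowerSeries ℝ)
    (hB : (degExp lam 1 - 1) * B = PowerSeries.X) (n : ℕ) :
    PowerSeries.coeff n B =
      ∑ k ∈ Finset.range (n + 1),
        rising (1 - lam) k * rising 1 k / (rising 2 k * k.factorial) *
          PowerSeries.coeff n ((1 - degExp lam 1) ^ k) := by
  have hBC : B = Aux.Cser lam :=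
    mul_left_cancel₀ (Aux.f_ne_zero lam) (hB.trans (Aux.mul_Cser lam).symm)
  rw [hBC, Aux.Cser, PowerSeries.coeff_mk]
  apply Finset.sum_congr rfl
  intro k _
  have hneg : ((1 : PowerSeries ℝ) - degExp lam 1) ^ k = (-1) ^ k * (degExp lam 1 - 1) ^ k := by
    rw [show ((1 : PowerSeries ℝ) - degExp lam 1) = -(degExp lam 1 - 1) by ring, neg_pow]
  have hm1 : PowerSeries.coeff n (((-1 : PowerSeries ℝ)) ^ k * (degExp lam 1 - 1) ^ k)
      = (-1 : ℝ) ^ k * PowerSeries.coeff n ((degExp lam 1 - 1) ^ k) := by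
    rw [show ((-1 : PowerSeries ℝ)) ^ k = PowerSeries.C ((-1 : ℝ) ^ k) by
      rw [map_pow, map_neg, map_one], PowerSeries.coeff_C_mul]
  rw [hneg, hm1]
  have hr1 : rising 1 k = (k.factorial : ℝ) := Aux.rising_one k
  have hr2 : rising 2 k = ((k + 1).factorial : ℝ) := Aux.rising_two k
  have hrn := Aux.rising_neg lam k
  have hb : Aux.b lam k = rising (1 - lam) k * (-1 : ℝ) ^ k / ((k + 1).factorial : ℝ) := by
    rw [Aux.b, ← hrn]; rfl
  rw [hr1, hr2, hb, Aux.p]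
  have h1 : ((k.factorial : ℕ) : ℝ) ≠ 0 := Nat.cast_ne_zero.mpr (Nat.factorial_ne_zero _)
  have h2 : (((k + 1).factorial : ℕ) : ℝ) ≠ 0 := Nat.cast_ne_zero.mpr (Nat.factorial_ne_zero _)
  field_simp
end
end

section
/- The generalized degenerate Bernoulli numbers of order p = -1 satisfy β_{n,λ}^{(-1)} = (λ-1)_{n,λ} for all n ≥ 0, where (x)_{n,λ} = x(x-λ)···(x-(n-1)λ). -/
open Finset PowerSeries

noncomputable section

namespace Stmt4Aux

lemma dfall_succ (x : ℝ) (n : ℕ) (l : ℝ) :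
    dfall x (n + 1) l = dfall x n l * (x - n * l) := Finset.prod_range_succ _ _

lemma dfall_zero (x l : ℝ) : dfall x 0 l = 1 := Finset.prod_range_zero _

lemma coeff_degExp (lam x : ℝ) (n : ℕ) :
    PowerSeries.coeff n (degExp lam x) = dfall x n lam / n.factorial :=
  coeff_mk _ _

lemma degExp_zero (lam : ℝ) : degExp lam 0 = 1 := by
  ext n
  rw [coeff_degExp, PowerSeries.coeff_one]
  cases n with
  | zero => simp [dfall_zero]
  | succ m =>
      have h : dfall 0 (m + 1) lam = 0 :=
        Finset.prod_eq_zero (Finset.mem_range.mpr (Nat.succ_pos m)) (by simp)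
      simp [h]

def bb (lam : ℝ) (n k : ℕ) : ℝ := PowerSeries.coeff n ((1 - degExp lam 1) ^ k)

def cc (lam : ℝ) (k : ℕ) : ℝ := rising (1 - lam) k / k.factorial

lemma hfac (k : ℕ) : ((k.factorial : ℝ)) ≠ 0 := Nat.cast_ne_zero.mpr k.factorial_ne_zero

lemma coeff_u (lam : ℝ) (n : ℕ) :
    PowerSeries.coeff n (1 - degExp lam 1) =
      (if n = 0 then 1 else 0) - dfall 1 n lam / n.factorial := by
  rw [map_sub, PowerSeries.coeff_one, coeff_degExp]

lemma coeff_zero_u (lam : ℝ) : PowerSeries.coeff 0 (1 - degExp lam 1) = 0 := by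
  rw [coeff_u]; simp [dfall_zero]

lemma bb_zero (lam : ℝ) (n : ℕ) : bb lam n 0 = if n = 0 then 1 else 0 := by
  rw [bb, pow_zero, PowerSeries.coeff_one]

lemma bb_eq_zero (lam : ℝ) : ∀ k n, n < k → bb lam n k = 0 := by
  intro k
  induction k with
  | zero => exact fun n h => absurd h (Nat.not_lt_zero n)
  | succ k ih =>
      intro n h
      rw [bb, pow_succ, PowerSeries.coeff_mul]
      apply Finset.sum_eq_zero
      intro p hp
      rw [Finset.HasAntidiagonal.mem_antidiagonal] at hp
      rcases lt_or_ge p.1 k with h1 | h1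
      · rw [show PowerSeries.coeff p.1 ((1 - degExp lam 1) ^ k) = 0 from ih p.1 h1, zero_mul]
      · have h2 : p.2 = 0 := by omega
        rw [h2, coeff_zero_u, mul_zero]

lemma deriv_u (lam : ℝ) :
    (1 + PowerSeries.C lam * PowerSeries.X) *
        (PowerSeries.derivative ℝ (1 - degExp lam 1)) =
      (1 - degExp lam 1) - 1 := by
  ext n
  rw [add_mul, one_mul, mul_assoc, map_add, PowerSeries.coeff_C_mul]
  cases n with
  | zero =>
      rw [PowerSeries.coeff_zero_X_mul, PowerSeries.coeff_derivative]
      norm_num [coeff_degExp, dfall_succ, dfall_zero, PowerSeries.coeff_one, map_sub]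
      rw [← PowerSeries.coeff_zero_eq_constantCoeff_apply, coeff_degExp]
      simp [dfall_zero]
  | succ m =>
      rw [PowerSeries.coeff_succ_X_mul, PowerSeries.coeff_derivative,
        PowerSeries.coeff_derivative]
      simp only [map_sub, PowerSeries.coeff_one, coeff_degExp, Nat.succ_ne_zero, if_false,
        Nat.add_eq_zero, and_false, reduceIte]
      have h1 : dfall 1 (m + 1 + 1) lam = dfall 1 (m + 1) lam * (1 - (m + 1) * lam) := by
        rw [dfall_succ]; push_cast; ring
      have h2 : ((m + 1).factorial : ℝ) = (m + 1) * m.factorial := by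
        rw [Nat.factorial_succ]; push_cast; ring
      have h3 : ((m + 1 + 1).factorial : ℝ) = (m + 2) * (m + 1) * m.factorial := by
        rw [Nat.factorial_succ, Nat.factorial_succ]; push_cast; ring
      rw [h1, h3, h2]
      have hm : (m.factorial : ℝ) ≠ 0 := hfac m
      have hm1 : (m : ℝ) + 1 ≠ 0 := by positivity
      have hm2 : (m : ℝ) + 2 ≠ 0 := by positivity
      field_simp
      push_cast
      ring

lemma deriv_u_pow (lam : ℝ) (k : ℕ) :
    (1 + PowerSeries.C lam * PowerSeries.X) *
        (PowerSeries.derivative ℝ ((1 - degExp lam 1) ^ (k + 1))) =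
      (k + 1 : ℕ) • ((1 - degExp lam 1) ^ (k + 1) - (1 - degExp lam 1) ^ k) := by
  set u : PowerSeries ℝ := 1 - degExp lam 1 with hu
  have h : (PowerSeries.derivative ℝ) (u ^ (k + 1)) =
      (k + 1) • u ^ k • (PowerSeries.derivative ℝ) u := by
    simpa using Derivation.leibniz_pow (PowerSeries.derivative ℝ) (a := u) (k + 1)
  rw [h]
  simp only [smul_eq_mul, nsmul_eq_mul, Nat.cast_add, Nat.cast_one]
  have h0 := deriv_u lam
  rw [← hu] at h0
  calc (1 + PowerSeries.C lam * PowerSeries.X) *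
        (((k : PowerSeries ℝ) + 1) * (u ^ k * (PowerSeries.derivative ℝ) u))
      = ((k : PowerSeries ℝ) + 1) * (u ^ k *
          ((1 + PowerSeries.C lam * PowerSeries.X) * (PowerSeries.derivative ℝ) u)) := by
        ring
    _ = _ := by rw [h0]; ring

lemma bb_rec (lam : ℝ) (n k : ℕ) :
    (n + 1 : ℝ) * bb lam (n + 1) (k + 1) =
      (k + 1 : ℝ) * (bb lam n (k + 1) - bb lam n k) - lam * n * bb lam n (k + 1) := by
  have h := congrArg (PowerSeries.coeff n) (deriv_u_pow lam k)
  rw [add_mul, one_mul, mul_assoc, map_add, PowerSeries.coeff_C_mul, map_nsmul, map_sub,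
    PowerSeries.coeff_derivative] at h
  simp only [nsmul_eq_mul, Nat.cast_add, Nat.cast_one] at h
  cases n with
  | zero =>
      rw [PowerSeries.coeff_zero_X_mul] at h
      simp only [bb, Nat.cast_zero]
      push_cast at h ⊢
      linarith
  | succ m =>
      rw [PowerSeries.coeff_succ_X_mul, PowerSeries.coeff_derivative] at h
      simp only [bb]
      push_cast at h ⊢
      linarith

lemma cc_succ (lam : ℝ) (k : ℕ) :
    ((k : ℝ) + 1) * cc lam (k + 1) = ((k : ℝ) + 1 - lam) * cc lam k := by
  rw [cc, cc, rising, Finset.prod_range_succ, ← rising, Nat.factorial_succ]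
  have h1 := hfac k
  push_cast
  field_simp
  ring

lemma arec (lam : ℝ) (n : ℕ) :
    (n + 1 : ℝ) * ∑ k ∈ Finset.range (n + 2), cc lam k * bb lam (n + 1) k =
      (lam - 1 - n * lam) * ∑ k ∈ Finset.range (n + 1), cc lam k * bb lam n k := by
  set F : ℕ → ℝ := fun j => cc lam j * ((j : ℝ) - lam * n) * bb lam n j with hF
  have hF0 : F 0 = 0 := by
    rcases Nat.eq_zero_or_pos n with h | h
    · subst h; simp [hF]
    · simp [hF, bb_zero, Nat.pos_iff_ne_zero.mp h]
  have hFn : F (n + 1) = 0 := by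
    simp [hF, bb_eq_zero lam (n + 1) n (Nat.lt_succ_self n)]
  have hshift : ∑ k ∈ Finset.range (n + 1), F (k + 1) = ∑ k ∈ Finset.range (n + 1), F k := by
    have h1 := Finset.sum_range_succ' F (n + 1)
    have h2 := Finset.sum_range_succ F (n + 1)
    rw [h2, hFn, hF0] at h1
    linarith
  calc (n + 1 : ℝ) * ∑ k ∈ Finset.range (n + 2), cc lam k * bb lam (n + 1) k
      = ∑ k ∈ Finset.range (n + 2), (n + 1 : ℝ) * (cc lam k * bb lam (n + 1) k) := by
        rw [Finset.mul_sum]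
    _ = ∑ k ∈ Finset.range (n + 1), (n + 1 : ℝ) * (cc lam (k + 1) * bb lam (n + 1) (k + 1)) := by
        rw [Finset.sum_range_succ', bb_zero, if_neg (Nat.succ_ne_zero n)]
        simp
    _ = ∑ k ∈ Finset.range (n + 1), (F (k + 1) - ((k : ℝ) + 1) * cc lam (k + 1) * bb lam n k) := by
        apply Finset.sum_congr rfl
        intro k _
        have h := bb_rec lam n k
        have e : (n + 1 : ℝ) * (cc lam (k + 1) * bb lam (n + 1) (k + 1))
            = cc lam (k + 1) * ((n + 1 : ℝ) * bb lam (n + 1) (k + 1)) := by ring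
        rw [e, h, hF]
        push_cast
        ring
    _ = (∑ k ∈ Finset.range (n + 1), F (k + 1))
        - ∑ k ∈ Finset.range (n + 1), ((k : ℝ) + 1) * cc lam (k + 1) * bb lam n k := by
        rw [Finset.sum_sub_distrib]
    _ = (∑ k ∈ Finset.range (n + 1), F k)
        - ∑ k ∈ Finset.range (n + 1), ((k : ℝ) + 1 - lam) * cc lam k * bb lam n k := by
        rw [hshift]
        congr 1
        apply Finset.sum_congr rfl
        intro k _
        rw [cc_succ]
    _ = ∑ k ∈ Finset.range (n + 1),
          (lam - 1 - n * lam) * (cc lam k * bb lam n k) := by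
        rw [← Finset.sum_sub_distrib]
        apply Finset.sum_congr rfl
        intro k _
        rw [hF]
        ring
    _ = (lam - 1 - n * lam) * ∑ k ∈ Finset.range (n + 1), cc lam k * bb lam n k := by
        rw [Finset.mul_sum]

lemma key (lam : ℝ) (n : ℕ) :
    ∑ k ∈ Finset.range (n + 1), cc lam k * bb lam n k = dfall (lam - 1) n lam / n.factorial := by
  induction n with
  | zero =>
      simp [cc, bb_zero, rising, dfall_zero]
  | succ n ih =>
      have h := arec lam n
      rw [ih] at h
      have hn : ((n : ℝ) + 1) ≠ 0 := by positivity
      have hf := hfac n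
      have hd : dfall (lam - 1) (n + 1) lam = dfall (lam - 1) n lam * (lam - 1 - n * lam) := by
        rw [dfall_succ]
      have hf2 : ((n + 1).factorial : ℝ) = ((n : ℝ) + 1) * n.factorial := by
        rw [Nat.factorial_succ]; push_cast; ring
      rw [hd, hf2]
      rw [show ((n : ℕ) + 1 + 1) = (n + 1) + 1 from rfl] at h ⊢
      field_simp at h ⊢
      linarith

lemma rising_one (k : ℕ) : rising 1 k = (k.factorial : ℝ) := by
  rw [rising, ← Finset.prod_range_add_one_eq_factorial, Nat.cast_prod]
  exact Finset.prod_congr rfl fun j _ => by push_cast; ring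

end Stmt4Aux

theorem stmt4 (lam : ℝ) (n : ℕ) :
    genBeta lam (-1) n = dfall (lam - 1) n lam := by
  have hp : ((-1 : ℤ) : ℝ) + 2 = 1 := by norm_num
  rw [genBeta, genBetaPoly, Stmt4Aux.degExp_zero, mul_one, hp, map_sum]
  simp only [PowerSeries.coeff_smul, smul_eq_mul]
  have hw : ∀ k ∈ Finset.range (n + 1),
      rising (1 - lam) k * rising 1 k / (rising 1 k * (k.factorial : ℝ)) *
        PowerSeries.coeff n ((1 - degExp lam 1) ^ k) =
      Stmt4Aux.cc lam k * Stmt4Aux.bb lam n k := by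
    intro k _
    congr 1
    rw [Stmt4Aux.rising_one, Stmt4Aux.cc]
    have := Stmt4Aux.hfac k
    field_simp
  rw [Finset.sum_congr rfl hw, Stmt4Aux.key]
  have := Stmt4Aux.hfac n
  field_simp
end
end

section
/- For all nonnegative integers n, k with n ≥ k, we have Σ_{l=0}^{k} C(k,l) (-1)^{k-l} (l)_{n,λ} = k! · S_{2,λ}(n,k), and if n < k the left-hand sum equals 0. -/
open Finset PowerSeries

noncomputable section

lemma dfall_succ (x : ℝ) (n : ℕ) (lam : ℝ) :
    dfall x (n+1) lam = dfall x n lam * (x - n * lam) := Finset.prod_range_succ _ _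

lemma dfall_zero_left (n : ℕ) (lam : ℝ) (hn : n ≠ 0) : dfall 0 n lam = 0 := by
  obtain ⟨m, rfl⟩ := Nat.exists_eq_succ_of_ne_zero hn
  rw [dfall]
  apply Finset.prod_eq_zero (Finset.mem_range.mpr (Nat.succ_pos m))
  simp

lemma dfall_vandermonde (x y lam : ℝ) (n : ℕ) :
    dfall (x + y) n lam =
      ∑ j ∈ Finset.range (n + 1), (n.choose j : ℝ) * dfall x j lam * dfall y (n - j) lam := by
  induction n with
  | zero => simp [dfall]
  | succ n ih =>
    rw [dfall_succ, ih, Finset.sum_mul]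
    have key : ∀ j ∈ Finset.range (n + 1),
        (n.choose j : ℝ) * dfall x j lam * dfall y (n - j) lam * (x + y - n * lam)
          = (n.choose j : ℝ) * dfall x (j+1) lam * dfall y (n - j) lam
          + (n.choose j : ℝ) * dfall x j lam * dfall y (n - j + 1) lam := by
      intro j hj
      rw [Finset.mem_range] at hj
      rw [dfall_succ, dfall_succ]
      have h1 : ((n - j : ℕ) : ℝ) = (n : ℝ) - j := by
        have := Nat.cast_sub (by omega : j ≤ n) (R := ℝ); simpa using this
      rw [h1]; ring
    rw [Finset.sum_congr rfl key, Finset.sum_add_distrib]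
    -- expand the target
    rw [Finset.sum_range_succ'
      (fun j => ((n+1).choose j : ℝ) * dfall x j lam * dfall y (n + 1 - j) lam)]
    have hsplit : ∀ j ∈ Finset.range (n+1),
        ((n+1).choose (j+1) : ℝ) * dfall x (j+1) lam * dfall y (n + 1 - (j+1)) lam
          = (n.choose j : ℝ) * dfall x (j+1) lam * dfall y (n - j) lam
          + (n.choose (j+1) : ℝ) * dfall x (j+1) lam * dfall y (n - j) lam := by
      intro j hj
      have : ((n+1).choose (j+1) : ℝ) = (n.choose j : ℝ) + (n.choose (j+1) : ℝ) := by
        rw [Nat.choose_succ_succ]; push_cast; ring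
      rw [show n + 1 - (j+1) = n - j by omega, this]; ring
    rw [Finset.sum_congr rfl hsplit, Finset.sum_add_distrib]
    have hB : ∑ j ∈ Finset.range (n + 1),
        (n.choose j : ℝ) * dfall x j lam * dfall y (n - j + 1) lam
        = (∑ j ∈ Finset.range (n+1),
            (n.choose (j+1) : ℝ) * dfall x (j+1) lam * dfall y (n - j) lam)
          + ((n+1).choose 0 : ℝ) * dfall x 0 lam * dfall y (n + 1 - 0) lam := by
      have h2 : ∑ j ∈ Finset.range (n + 1),
          (n.choose j : ℝ) * dfall x j lam * dfall y (n - j + 1) lam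
          = ∑ j ∈ Finset.range (n + 2),
          (n.choose j : ℝ) * dfall x j lam * dfall y (n + 1 - j) lam := by
        rw [Finset.sum_range_succ (fun j => (n.choose j : ℝ) * dfall x j lam * dfall y (n + 1 - j) lam)]
        rw [Nat.choose_succ_self]
        push_cast
        rw [zero_mul, zero_mul, add_zero]
        apply Finset.sum_congr rfl
        intro j hj
        rw [Finset.mem_range] at hj
        congr 2
        omega
      rw [h2, Finset.sum_range_succ'
        (fun j => (n.choose j : ℝ) * dfall x j lam * dfall y (n + 1 - j) lam)]
      simp [dfall]
    rw [hB]
    ring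

lemma degExp_zero (lam : ℝ) : degExp lam 0 = 1 := by
  ext n
  rcases n with _ | n
  · simp [degExp, dfall]
  · simp [degExp, dfall_zero_left (n+1) lam (Nat.succ_ne_zero n), PowerSeries.coeff_one]

lemma degExp_mul (lam x y : ℝ) : degExp lam x * degExp lam y = degExp lam (x + y) := by
  ext n
  rw [PowerSeries.coeff_mul, Finset.Nat.sum_antidiagonal_eq_sum_range_succ_mk]
  simp only [degExp, PowerSeries.coeff_mk]
  rw [dfall_vandermonde]
  rw [Finset.sum_div]
  apply Finset.sum_congr rfl
  intro j hj
  rw [Finset.mem_range] at hj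
  have hfac : (n.choose j : ℝ) * j.factorial * (n-j).factorial = n.factorial := by
    rw [← Nat.cast_mul, ← Nat.cast_mul, Nat.choose_mul_factorial_mul_factorial (by omega)]
  have h1 : (j.factorial : ℝ) ≠ 0 := Nat.cast_ne_zero.mpr (Nat.factorial_ne_zero j)
  have h2 : ((n-j).factorial : ℝ) ≠ 0 := Nat.cast_ne_zero.mpr (Nat.factorial_ne_zero (n-j))
  have h3 : (n.factorial : ℝ) ≠ 0 := Nat.cast_ne_zero.mpr (Nat.factorial_ne_zero n)
  field_simp
  rw [← hfac]; ring

lemma degExp_pow (lam : ℝ) (l : ℕ) : (degExp lam 1) ^ l = degExp lam l := by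
  induction l with
  | zero => rw [pow_zero, Nat.cast_zero, degExp_zero]
  | succ l ih =>
    rw [pow_succ, ih, degExp_mul]
    push_cast; ring_nf

lemma coeff_degExp (lam x : ℝ) (n : ℕ) :
    PowerSeries.coeff n (degExp lam x) = dfall x n lam / n.factorial := by
  simp [degExp]

lemma key_sum (lam : ℝ) (n k : ℕ) :
    ∑ l ∈ Finset.range (k + 1), (k.choose l : ℝ) * (-1) ^ (k - l) * dfall l n lam
      = (n.factorial : ℝ) * PowerSeries.coeff n ((degExp lam 1 - 1) ^ k) := by
  rw [sub_pow, map_sum, Finset.mul_sum]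
  apply Finset.sum_congr rfl
  intro l hl
  rw [Finset.mem_range] at hl
  rw [one_pow, mul_one]
  rw [show ((-1 : PowerSeries ℝ) ^ (l + k) * (degExp lam 1) ^ l * (k.choose l : ℕ) : PowerSeries ℝ)
      = (PowerSeries.C ((-1 : ℝ) ^ (l + k) * (k.choose l : ℝ))) * ((degExp lam 1) ^ l) by
    rw [map_mul, map_pow, map_neg, map_one, map_natCast]
    ring]
  rw [PowerSeries.coeff_C_mul, degExp_pow, coeff_degExp]
  have hpar : ((-1 : ℝ)) ^ (l + k) = (-1) ^ (k - l) := by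
    rw [show l + k = (k - l) + 2 * l by omega, pow_add, pow_mul]
    simp
  have h3 : (n.factorial : ℝ) ≠ 0 := Nat.cast_ne_zero.mpr (Nat.factorial_ne_zero n)
  rw [hpar]
  have h4 : (n.factorial : ℝ) * ((-1) ^ (k - l) * (k.choose l : ℝ) * (dfall (l : ℝ) n lam / (n.factorial : ℝ)))
      = (k.choose l : ℝ) * (-1) ^ (k - l) * dfall (l : ℝ) n lam := by
    rw [div_eq_mul_inv]
    have : (n.factorial : ℝ) * (n.factorial : ℝ)⁻¹ = 1 := mul_inv_cancel₀ h3
    calc (n.factorial : ℝ) * ((-1) ^ (k - l) * (k.choose l : ℝ) * (dfall (l : ℝ) n lam * ((n.factorial : ℝ))⁻¹))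
        = ((n.factorial : ℝ) * (n.factorial : ℝ)⁻¹) * ((-1) ^ (k - l) * (k.choose l : ℝ) * dfall (l : ℝ) n lam) := by ring
      _ = (k.choose l : ℝ) * (-1) ^ (k - l) * dfall (l : ℝ) n lam := by rw [this]; ring
  rw [h4]

theorem stmt6 (lam : ℝ) (n k : ℕ) :
    (k ≤ n →
      ∑ l ∈ Finset.range (k + 1), (k.choose l : ℝ) * (-1) ^ (k - l) * dfall l n lam =
        (k.factorial : ℝ) * S2 lam n k) ∧
    (n < k →
      ∑ l ∈ Finset.range (k + 1), (k.choose l : ℝ) * (-1) ^ (k - l) * dfall l n lam = 0) := by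
  constructor
  · intro _
    rw [key_sum, S2]
    have hk : (k.factorial : ℝ) ≠ 0 := Nat.cast_ne_zero.mpr (Nat.factorial_ne_zero k)
    field_simp
  · intro hnk
    rw [key_sum]
    have hdvd : (PowerSeries.X : PowerSeries ℝ) ^ k ∣ (degExp lam 1 - 1) ^ k := by
      apply pow_dvd_pow_of_dvd
      rw [PowerSeries.X_dvd_iff, map_sub, map_one, ← PowerSeries.coeff_zero_eq_constantCoeff_apply,
        coeff_degExp]
      simp [dfall]
    rw [PowerSeries.X_pow_dvd_iff.mp hdvd n hnk, mul_zero]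
end
end
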